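/- The Euler–Mascheroni constant satisfies γ = log(4π) − 2 + 2^4 · Σ_{n=1}^∞ n·a_{2n}/2^{2n}, i.e. γ = log(4π) − 2 + 16·Σ_{n=1}^∞ n·a_{2n}/4^n. -/

import Mathlib

/-- The Riemann xi function: `ξ(s) = (1/2)·s·(s−1)·π^{−s/2}·Γ(s/2)·ζ(s)`. -/
noncomputable def riemannXi (s : ℂ) : ℂ := (1 / 2) * s * (s - 1) * completedRiemannZeta s

/-- The `2n`-th Taylor coefficient of `ξ` at `s = 1/2`, a real number. -/
noncomputable def a (n : ℕ) : ℝ :=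
  (iteratedDeriv (2 * n) riemannXi (1 / 2)).re / (2 * n).factorial

open Complex Real Filter Topology

/-- The entire version of the xi function. -/
noncomputable def xiEnt (s : ℂ) : ℂ := 1 / 2 * s * (s - 1) * completedRiemannZeta₀ s + 1 / 2

lemma xiEnt_diff : Differentiable ℂ xiEnt :=
  ((((differentiable_const _).mul differentiable_id).mul (differentiable_id.sub_const 1)).mul
    differentiable_completedZeta₀).add_const _

lemma xi_eq_xiEnt {s : ℂ} (h0 : s ≠ 0) (h1 : s ≠ 1) : riemannXi s = xiEnt s := by
  have h1' : (1 : ℂ) - s ≠ 0 := sub_ne_zero.mpr (Ne.symm h1)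
  unfold riemannXi xiEnt
  rw [completedRiemannZeta_eq]
  field_simp
  ring

lemma xi_eventuallyEq : riemannXi =ᶠ[𝓝 (1 / 2 : ℂ)] xiEnt := by
  have hmem : ({(0 : ℂ), 1} : Set ℂ)ᶜ ∈ 𝓝 (1 / 2 : ℂ) := by
    refine (isOpen_compl_iff.mpr ?_).mem_nhds ?_
    · exact (Set.toFinite _).isClosed
    · simp only [Set.mem_compl_iff, Set.mem_insert_iff, Set.mem_singleton_iff]
      push_neg
      constructor <;> norm_num
  filter_upwards [hmem] with s hs
  simp only [Set.mem_compl_iff, Set.mem_insert_iff, Set.mem_singleton_iff] at hs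
  push_neg at hs
  exact xi_eq_xiEnt hs.1 hs.2

lemma xiEnt_symm (s : ℂ) : xiEnt (1 - s) = xiEnt s := by
  unfold xiEnt
  rw [completedRiemannZeta₀_one_sub]
  ring

lemma xiEnt_odd_deriv {n : ℕ} (hn : Odd n) : iteratedDeriv n xiEnt (1 / 2) = 0 := by
  have h1 : ∀ z : ℂ, xiEnt (1 / 2 + -z) = xiEnt (1 / 2 + z) := by
    intro z
    rw [show (1 / 2 : ℂ) + -z = 1 - (1 / 2 + z) by ring, xiEnt_symm]
  have h2 := iteratedDeriv_comp_neg n (fun z => xiEnt (1 / 2 + z)) 0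
  simp only [h1, neg_zero, hn.neg_one_pow, neg_smul, one_smul] at h2
  have h3 : iteratedDeriv n (fun z => xiEnt (1 / 2 + z)) 0 = iteratedDeriv n xiEnt (1 / 2) := by
    rw [iteratedDeriv_comp_const_add n xiEnt (1 / 2)]
    norm_num
  rw [h3] at h2
  exact CharZero.eq_neg_self_iff.mp h2

lemma deriv_xiEnt_one :
    deriv xiEnt 1 = ((Real.eulerMascheroniConstant : ℂ) - Complex.log (4 * π)) / 4 + 1 / 2 := by
  have hu : HasDerivAt (fun s : ℂ => 1 / 2 * s * (s - 1)) (1 / 2) 1 := by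
    have h := (((hasDerivAt_id (1 : ℂ)).const_mul (1 / 2 : ℂ)).mul
      ((hasDerivAt_id (1 : ℂ)).sub_const 1))
    simpa [Pi.mul_def] using h
  have hΛ : HasDerivAt completedRiemannZeta₀ (deriv completedRiemannZeta₀ 1) 1 :=
    (differentiable_completedZeta₀ 1).hasDerivAt
  have h := (hu.mul hΛ).add_const (1 / 2 : ℂ)
  have hd : deriv xiEnt 1 = 1 / 2 * completedRiemannZeta₀ 1 +
      1 / 2 * 1 * (1 - 1) * deriv completedRiemannZeta₀ 1 := h.deriv
  rw [hd, completedRiemannZeta₀_one]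
  ring

lemma key_hasSum :
    HasSum (fun n : ℕ => (n : ℝ) * a n / 4 ^ n) ((deriv xiEnt 1).re / 4) := by
  -- Taylor series of the derivative of xiEnt at 1/2, evaluated at 1
  have hd : Differentiable ℂ (deriv xiEnt) :=
    analyticOnNhd_univ_iff_differentiable.mp
      ((analyticOnNhd_univ_iff_differentiable.mpr xiEnt_diff).deriv)
  have hS := Complex.hasSum_taylorSeries_of_entire hd (c := (1 / 2 : ℂ)) (z := 1)
  set g : ℕ → ℂ :=
    fun k => (Nat.factorial k : ℂ)⁻¹ • ((1 : ℂ) - 1 / 2) ^ k • iteratedDeriv k (deriv xiEnt) (1 / 2) with hg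
  -- restrict to odd indices
  have hinj : Function.Injective (fun n : ℕ => 2 * n + 1) := fun m n h => by
    dsimp at h; omega
  have hvanish : ∀ k : ℕ, k ∉ Set.range (fun n : ℕ => 2 * n + 1) → g k = 0 := by
    intro k hk
    have hkeven : Even k := by
      rcases Nat.even_or_odd k with h | h
      · exact h
      · obtain ⟨m, hm⟩ := h
        exact absurd ⟨m, hm.symm⟩ hk
    have : iteratedDeriv k (deriv xiEnt) (1 / 2) = 0 := by
      rw [← iteratedDeriv_succ']
      exact xiEnt_odd_deriv (Even.add_one hkeven)
    simp only [hg]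
    rw [this]
    simp
  have hS2 : HasSum (g ∘ fun n : ℕ => 2 * n + 1) (deriv xiEnt 1) :=
    (hinj.hasSum_iff hvanish).mpr hS
  -- the target complex series
  set t : ℕ → ℂ :=
    fun n => (n : ℂ) * (iteratedDeriv (2 * n) xiEnt (1 / 2) / ((2 * n).factorial : ℂ)) / 4 ^ n
    with ht
  have hterm : ∀ n : ℕ, t (n + 1) = (g ∘ fun n : ℕ => 2 * n + 1) n / 4 := by
    intro n
    have hder : iteratedDeriv (2 * n + 1) (deriv xiEnt) (1 / 2) =
        iteratedDeriv (2 * (n + 1)) xiEnt (1 / 2) := by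
      conv_rhs => rw [show 2 * (n + 1) = (2 * n + 1) + 1 by ring, iteratedDeriv_succ']
    simp only [Function.comp, hg, ht, smul_eq_mul]
    rw [hder]
    have hfac : ((2 * (n + 1)).factorial : ℂ) =
        ((2 * n + 2 : ℕ) : ℂ) * ((2 * n + 1).factorial : ℂ) := by
      rw [show 2 * (n + 1) = (2 * n + 1) + 1 by ring, Nat.factorial_succ]
      push_cast
      ring
    have h4 : (4 : ℂ) ^ (n + 1) = 2 ^ (2 * n + 2) := by
      rw [show (4 : ℂ) = 2 ^ 2 by norm_num, ← pow_mul]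
      ring_nf
    have h2 : ((1 : ℂ) - 1 / 2) ^ (2 * n + 1) = ((2 : ℂ) ^ (2 * n + 1))⁻¹ := by
      rw [show (1 : ℂ) - 1 / 2 = 2⁻¹ by norm_num, inv_pow]
    have key : (((n + 1 : ℕ) : ℂ)) * ((2 * n + 1).factorial : ℂ) * 2 ^ (2 * n + 1) * 4 =
        ((2 * (n + 1)).factorial : ℂ) * 4 ^ (n + 1) := by
      rw [hfac, h4]
      push_cast
      ring
    have hne1 : ((2 * n + 1).factorial : ℂ) ≠ 0 := by exact_mod_cast (2 * n + 1).factorial_ne_zero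
    have hA : ((2 * (n + 1)).factorial : ℂ) ≠ 0 := by
      exact_mod_cast (2 * (n + 1)).factorial_ne_zero
    have h4ne : (4 : ℂ) ^ (n + 1) ≠ 0 := pow_ne_zero _ (by norm_num)
    have hp : (2 : ℂ) ^ (2 * n + 1) ≠ 0 := pow_ne_zero _ two_ne_zero
    set c := iteratedDeriv (2 * (n + 1)) xiEnt (1 / 2) with hc
    rw [h2, ← mul_div_assoc, div_div, inv_mul_eq_div, inv_mul_eq_div, div_div, div_div]
    rw [div_eq_div_iff (mul_ne_zero hA h4ne)
      (mul_ne_zero hp (mul_ne_zero hne1 (by norm_num)))]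
    linear_combination c * key
  have hS3 : HasSum (fun n : ℕ => t (n + 1)) (deriv xiEnt 1 / 4) := by
    have := hS2.div_const 4
    exact HasSum.congr_fun this hterm
  have ht0 : t 0 = 0 := by simp [ht]
  have hS4 : HasSum t (deriv xiEnt 1 / 4) := by
    have := (hasSum_nat_add_iff (f := t) 1).mp (by simpa using hS3)
    simpa [ht0] using this
  -- take real parts
  have hS5 := hasSum_re hS4
  have h6 : (deriv xiEnt 1 / 4).re = (deriv xiEnt 1).re / 4 := by
    rw [show (4 : ℂ) = ((4 : ℝ) : ℂ) by norm_num, Complex.div_ofReal_re]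
  rw [h6] at hS5
  refine HasSum.congr_fun hS5 ?_
  intro n
  have hxi : iteratedDeriv (2 * n) riemannXi (1 / 2) = iteratedDeriv (2 * n) xiEnt (1 / 2) :=
    xi_eventuallyEq.iteratedDeriv_eq (2 * n)
  have hrw : t n = (((n : ℝ) / ((2 * n).factorial : ℝ) / 4 ^ n : ℝ) : ℂ) *
      iteratedDeriv (2 * n) xiEnt (1 / 2) := by
    simp only [ht]
    push_cast
    ring
  rw [hrw, Complex.re_ofReal_mul]
  unfold a
  rw [hxi]
  ring

theorem eulerMascheroni_eq_log_four_pi_sub_two_add_sum :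
    Real.eulerMascheroniConstant =
      Real.log (4 * Real.pi) - 2 + 16 * ∑' n : ℕ, (n : ℝ) * a n / 4 ^ n := by
  have := key_hasSum.tsum_eq
  rw [this, deriv_xiEnt_one]
  have hlog : Complex.log (4 * (π : ℂ)) = ((Real.log (4 * π) : ℝ) : ℂ) := by
    rw [show (4 : ℂ) * (π : ℂ) = ((4 * π : ℝ) : ℂ) by push_cast; ring,
      Complex.ofReal_log (by positivity)]
  rw [hlog]
  have : ((Real.eulerMascheroniConstant : ℂ) - ((Real.log (4 * π) : ℝ) : ℂ)) / 4 + 1 / 2 =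
      (((Real.eulerMascheroniConstant - Real.log (4 * π)) / 4 + 1 / 2 : ℝ) : ℂ) := by
    push_cast; ring
  rw [this, Complex.ofReal_re]
  ring
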